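/- arXiv:1206.4956 — 3 statements merged into one kernel-verified Lean document; each statement's English description precedes it below -/
import Mathlib

section
/- The trajectory moment generating function started from a Fock state reduces to a classical deformed Markov chain: for every s ∈ ℝ, every n ≥ 1 and every k ∈ ℕ, ∑_{(i₁,…,iₙ) ∈ {1,2}ⁿ} exp(s · #{j : iⱼ = 1}) · ‖K_{iₙ} ⋯ K_{i₁} e_k‖² = (M_sⁿ 𝟙)(k), where M_s is the operator acting on bounded functions f : ℕ → ℝ by (M_s f)(k) = eˢ sin²(φ√(k+1)) f(k+1) + cos²(φ√(k+1)) f(k), and 𝟙 denotes the constant function 1. -/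
noncomputable section

abbrev H : Type := lp (fun _ : ℕ => ℂ) 2

/-- The canonical (Fock) basis vector `e_n`. -/
noncomputable def fock (n : ℕ) : H := lp.single 2 n 1

/-- The unnormalized post-measurement vector `K_{iₙ} ⋯ K_{i₂} K_{i₁} ψ` associated to a
detection record `i = (i₁, …, iₙ) ∈ {1,2}ⁿ` (outcome `0 : Fin 2` stands for a ground-state
detection, i.e. `K₁`, and `1 : Fin 2` for an excited-state detection, i.e. `K₂`). -/
noncomputable def applyTraj (K₁ K₂ : H →L[ℂ] H) : {n : ℕ} → (Fin n → Fin 2) → H → H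
  | 0, _, ψ => ψ
  | n + 1, i, ψ =>
      applyTraj K₁ K₂ (fun j : Fin n => i j.succ) ((if i 0 = 0 then K₁ else K₂) ψ)

/-- The classical deformed Markov transition operator
`(M_s f)(k) = eˢ sin²(φ√(k+1)) f(k+1) + cos²(φ√(k+1)) f(k)`. -/
noncomputable def deformedMarkov (φ s : ℝ) (f : ℕ → ℝ) : ℕ → ℝ := fun k =>
  Real.exp s * Real.sin (φ * Real.sqrt (k + 1)) ^ 2 * f (k + 1) +
    Real.cos (φ * Real.sqrt (k + 1)) ^ 2 * f k

lemma applyTraj_smul (K₁ K₂ : H →L[ℂ] H) :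
    ∀ {n : ℕ} (i : Fin n → Fin 2) (c : ℂ) (ψ : H),
      applyTraj K₁ K₂ i (c • ψ) = c • applyTraj K₁ K₂ i ψ
  | 0, _, c, ψ => rfl
  | n + 1, i, c, ψ => by
      rw [applyTraj, applyTraj, map_smul, applyTraj_smul]

lemma norm_fock (k : ℕ) : ‖fock k‖ = 1 := by
  have : (0 : ENNReal) < 2 := by norm_num
  rw [fock, lp.norm_single this]
  simp

lemma key (φ : ℝ) (K₁ K₂ : H →L[ℂ] H)
    (hK₁ : ∀ n : ℕ, K₁ (fock n) =
      ((Real.sin (φ * Real.sqrt (n + 1)) : ℝ) : ℂ) • fock (n + 1))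
    (hK₂ : ∀ n : ℕ, K₂ (fock n) =
      ((Real.cos (φ * Real.sqrt (n + 1)) : ℝ) : ℂ) • fock n)
    (s : ℝ) : ∀ (n k : ℕ),
    ∑ i : Fin n → Fin 2,
        Real.exp (s * (Finset.univ.filter fun j => i j = 0).card) *
          ‖applyTraj K₁ K₂ i (fock k)‖ ^ 2 =
      (deformedMarkov φ s)^[n] (fun _ => 1) k := by
  intro n
  induction n with
  | zero =>
    intro k
    simp [applyTraj, norm_fock]
  | succ n ih =>
    intro k
    rw [← (Fin.consEquiv (fun _ : Fin (n + 1) => Fin 2)).sum_comp]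
    rw [Fintype.sum_prod_type]
    rw [Fin.sum_univ_two]
    simp only [show ∀ (a : Fin 2) (x : Fin n → Fin 2),
        ((Fin.consEquiv fun _ => Fin 2) (a, x) : Fin (n+1) → Fin 2) = Fin.cons a x
      from fun _ _ => rfl]
    have hcard : ∀ (a : Fin 2) (t : Fin n → Fin 2),
        ((Finset.univ.filter fun j => (Fin.cons a t : Fin (n+1) → Fin 2) j = 0).card : ℝ) =
          (if a = 0 then 1 else 0) +
            ((Finset.univ.filter fun j => t j = 0).card : ℝ) := by
      intro a t
      rw [Finset.card_filter, Finset.card_filter]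
      push_cast
      rw [Fin.sum_univ_succ]
      simp [Fin.cons_succ, Fin.cons_zero]
    have htraj : ∀ (a : Fin 2) (t : Fin n → Fin 2),
        applyTraj K₁ K₂ (Fin.cons a t) (fock k) =
          applyTraj K₁ K₂ t ((if a = 0 then K₁ else K₂) (fock k)) := by
      intro a t
      rw [applyTraj]
      simp [Fin.cons_succ, Fin.cons_zero]
    have h0 : ∑ t : Fin n → Fin 2,
        Real.exp (s * ((Finset.univ.filter fun j =>
          (Fin.cons (0 : Fin 2) t : Fin (n+1) → Fin 2) j = 0).card)) *
          ‖applyTraj K₁ K₂ (Fin.cons (0 : Fin 2) t) (fock k)‖ ^ 2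
        = Real.exp s * Real.sin (φ * Real.sqrt (k + 1)) ^ 2 *
            (deformedMarkov φ s)^[n] (fun _ => 1) (k + 1) := by
      rw [← ih (k + 1), Finset.mul_sum]
      refine Finset.sum_congr rfl fun t _ => ?_
      have h1 : applyTraj K₁ K₂ (Fin.cons (0 : Fin 2) t) (fock k) =
          (((Real.sin (φ * Real.sqrt (k + 1)) : ℝ) : ℂ)) •
            applyTraj K₁ K₂ t (fock (k + 1)) := by
        rw [htraj, if_pos rfl, hK₁, applyTraj_smul]
      rw [h1, norm_smul, hcard, if_pos rfl, mul_add, mul_one, Real.exp_add]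
      simp only [Complex.norm_real, Real.norm_eq_abs]
      rw [mul_pow, sq_abs]
      ring
    have h1 : ∑ t : Fin n → Fin 2,
        Real.exp (s * ((Finset.univ.filter fun j =>
          (Fin.cons (1 : Fin 2) t : Fin (n+1) → Fin 2) j = 0).card)) *
          ‖applyTraj K₁ K₂ (Fin.cons (1 : Fin 2) t) (fock k)‖ ^ 2
        = Real.cos (φ * Real.sqrt (k + 1)) ^ 2 *
            (deformedMarkov φ s)^[n] (fun _ => 1) k := by
      rw [← ih k, Finset.mul_sum]
      refine Finset.sum_congr rfl fun t _ => ?_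
      have h1 : applyTraj K₁ K₂ (Fin.cons (1 : Fin 2) t) (fock k) =
          (((Real.cos (φ * Real.sqrt (k + 1)) : ℝ) : ℂ)) •
            applyTraj K₁ K₂ t (fock k) := by
        rw [htraj, if_neg (by decide), hK₂, applyTraj_smul]
      rw [h1, norm_smul, hcard, if_neg (by decide), zero_add]
      simp only [Complex.norm_real, Real.norm_eq_abs]
      rw [mul_pow, sq_abs]
      ring
    rw [h0, h1, Function.iterate_succ_apply']
    rfl

/-- The trajectory moment generating function started from a Fock state `e_k`
reduces to a classical deformed Markov chain:
`∑_{i ∈ {1,2}ⁿ} exp(s·#{j : iⱼ = 1})·‖K_{iₙ} ⋯ K_{i₁} e_k‖² = (M_sⁿ 𝟙)(k)`. -/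
theorem traj_mgf_classical (φ : ℝ) (K₁ K₂ : H →L[ℂ] H)
    (hK₁ : ∀ n : ℕ, K₁ (fock n) =
      ((Real.sin (φ * Real.sqrt (n + 1)) : ℝ) : ℂ) • fock (n + 1))
    (hK₂ : ∀ n : ℕ, K₂ (fock n) =
      ((Real.cos (φ * Real.sqrt (n + 1)) : ℝ) : ℂ) • fock n)
    (s : ℝ) (n : ℕ) (hn : 1 ≤ n) (k : ℕ) :
    ∑ i : Fin n → Fin 2,
        Real.exp (s * (Finset.univ.filter fun j => i j = 0).card) *
          ‖applyTraj K₁ K₂ i (fock k)‖ ^ 2 =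
      (deformedMarkov φ s)^[n] (fun _ => 1) k := by
  exact key φ K₁ K₂ hK₁ hK₂ s n k
end
end

section
/- The stationary rate of ground-state atom detections equals the excess mean photon number: the series ∑_{n≥0} n·π(n) and ∑_{n≥0} π(n)·sin²(φ√(n+1)) both converge, and N_ex · ∑_{n≥0} π(n)·sin²(φ√(n+1)) = ∑_{n≥0} n·π(n) − ν · ∑_{n≥0} π(n). -/
noncomputable section

/-- The unnormalized stationary weights
`π(n) = ∏_{k=1}^{n} (ν/(ν+1) + (N_ex/(ν+1))·sin²(φ√k)/k)`, with `π(0) = 1`. -/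
noncomputable def statWeight (Nex ν φ : ℝ) (n : ℕ) : ℝ :=
  ∏ k ∈ Finset.Icc 1 n,
    (ν / (ν + 1) + Nex / (ν + 1) * Real.sin (φ * Real.sqrt k) ^ 2 / k)

lemma statWeight_nonneg {Nex ν φ : ℝ} (hNex : 0 < Nex) (hν : 0 ≤ ν) (n : ℕ) :
    0 ≤ statWeight Nex ν φ n := by
  apply Finset.prod_nonneg
  intro k hk
  have hk0 : (0:ℝ) ≤ (k : ℝ) := k.cast_nonneg
  positivity

lemma statWeight_succ (Nex ν φ : ℝ) (n : ℕ) :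
    statWeight Nex ν φ (n+1) = statWeight Nex ν φ n *
      (ν / (ν + 1) + Nex / (ν + 1) * Real.sin (φ * Real.sqrt ((n:ℝ)+1)) ^ 2 / ((n:ℝ)+1)) := by
  unfold statWeight
  rw [Finset.prod_Icc_succ_top (Nat.succ_le_succ (Nat.zero_le n))]
  push_cast
  ring

lemma key_identity {Nex ν φ : ℝ} (hν : 0 ≤ ν) (n : ℕ) :
    Nex * (statWeight Nex ν φ n * Real.sin (φ * Real.sqrt ((n:ℝ)+1)) ^ 2) =
      (ν+1) * (((n:ℝ)+1) * statWeight Nex ν φ (n+1)) -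
        ν * (((n:ℝ)+1) * statWeight Nex ν φ n) := by
  rw [statWeight_succ]
  have h1 : (ν:ℝ)+1 ≠ 0 := by linarith
  have h2 : ((n:ℝ)+1) ≠ 0 := by positivity
  field_simp
  ring

/-- The stationary rate of ground-state atom detections equals the excess
mean photon number: the series `∑ n·π(n)` and `∑ π(n)·sin²(φ√(n+1))` converge, and
`N_ex·∑_{n≥0} π(n)·sin²(φ√(n+1)) = ∑_{n≥0} n·π(n) − ν·∑_{n≥0} π(n)`. -/
theorem stationary_count_rate (Nex ν φ : ℝ) (hNex : 0 < Nex) (hν : 0 ≤ ν) :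
    Summable (fun n : ℕ => (n : ℝ) * statWeight Nex ν φ n) ∧
    Summable (fun n : ℕ =>
      statWeight Nex ν φ n * Real.sin (φ * Real.sqrt (n + 1)) ^ 2) ∧
    Nex * ∑' n : ℕ, statWeight Nex ν φ n * Real.sin (φ * Real.sqrt (n + 1)) ^ 2 =
      (∑' n : ℕ, (n : ℝ) * statWeight Nex ν φ n) -
        ν * ∑' n : ℕ, statWeight Nex ν φ n := by
  have hπ0 : ∀ n, 0 ≤ statWeight Nex ν φ n := statWeight_nonneg hNex hν
  have hν1 : (0:ℝ) < ν + 1 := by linarith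
  set r : ℝ := (ν + 3/4) / (ν + 1) with hr
  have hr1 : r < 1 := by
    rw [hr, div_lt_one hν1]; linarith
  -- factor bound: f(n+1) ≤ (ν + Nex/(n+1))/(ν+1)
  have hfac : ∀ n : ℕ,
      ν / (ν + 1) + Nex / (ν + 1) * Real.sin (φ * Real.sqrt ((n:ℝ)+1)) ^ 2 / ((n:ℝ)+1)
        ≤ (ν + Nex / ((n:ℝ)+1)) / (ν + 1) := by
    intro n
    have hn1 : (0:ℝ) < (n:ℝ)+1 := by positivity
    have hs : Real.sin (φ * Real.sqrt ((n:ℝ)+1)) ^ 2 ≤ 1 := Real.sin_sq_le_one _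
    have : Nex / (ν + 1) * Real.sin (φ * Real.sqrt ((n:ℝ)+1)) ^ 2 / ((n:ℝ)+1)
        ≤ Nex / (ν + 1) / ((n:ℝ)+1) := by
      apply div_le_div_of_nonneg_right ?_ hn1.le
      nlinarith [div_pos hNex hν1]
    rw [add_div]
    calc ν / (ν + 1) + Nex / (ν + 1) * Real.sin (φ * Real.sqrt ((n:ℝ)+1)) ^ 2 / ((n:ℝ)+1)
        ≤ ν / (ν + 1) + Nex / (ν + 1) / ((n:ℝ)+1) := by linarith
      _ = ν / (ν + 1) + Nex / ((n:ℝ)+1) / (ν + 1) := by ring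
  -- eventual bound threshold
  obtain ⟨N, hN⟩ : ∃ N : ℕ, ∀ n ≥ N, ν + Nex ≤ 3/4 * (n:ℝ) := by
    obtain ⟨N, hN⟩ := exists_nat_ge ((4/3) * (ν + Nex))
    exact ⟨N, fun n hn => by
      have : ((N:ℝ)) ≤ n := Nat.cast_le.2 hn
      linarith⟩
  -- summability of n * π n
  have hT : Summable (fun n : ℕ => (n : ℝ) * statWeight Nex ν φ n) := by
    apply summable_of_ratio_norm_eventually_le hr1
    filter_upwards [Filter.eventually_ge_atTop (max N 1)] with n hn
    have hnN : ν + Nex ≤ 3/4 * (n:ℝ) := hN n (le_trans (le_max_left _ _) hn)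
    have hn1 : (1:ℕ) ≤ n := le_trans (le_max_right _ _) hn
    have hn1' : (1:ℝ) ≤ (n:ℝ) := by exact_mod_cast hn1
    have hπ := hπ0 n
    have h1 : (0:ℝ) ≤ (n:ℝ) * statWeight Nex ν φ n := by positivity
    have h2 : (0:ℝ) ≤ ((n:ℝ)+1) * statWeight Nex ν φ (n+1) := by
      have := hπ0 (n+1); positivity
    rw [Real.norm_of_nonneg h1, Real.norm_of_nonneg]
    · push_cast
      rw [statWeight_succ]
      have hfn := hfac n
      have hstep : ((n:ℝ)+1) * ((ν + Nex / ((n:ℝ)+1)) / (ν + 1)) ≤ r * (n:ℝ) := by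
        have hn1p : (0:ℝ) < (n:ℝ)+1 := by linarith
        have heq : ((n:ℝ)+1) * ((ν + Nex / ((n:ℝ)+1)) / (ν + 1))
            = (ν * ((n:ℝ)+1) + Nex) / (ν + 1) := by
          field_simp
        rw [heq, hr, div_mul_eq_mul_div, div_le_div_iff₀ hν1 hν1]
        nlinarith
      calc ((n:ℝ)+1) * (statWeight Nex ν φ n *
            (ν / (ν + 1) + Nex / (ν + 1) * Real.sin (φ * Real.sqrt ((n:ℝ)+1)) ^ 2 / ((n:ℝ)+1)))
          ≤ ((n:ℝ)+1) * (statWeight Nex ν φ n * ((ν + Nex / ((n:ℝ)+1)) / (ν + 1))) := by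
            apply mul_le_mul_of_nonneg_left ?_ (by positivity)
            exact mul_le_mul_of_nonneg_left hfn hπ
        _ = statWeight Nex ν φ n * (((n:ℝ)+1) * ((ν + Nex / ((n:ℝ)+1)) / (ν + 1))) := by ring
        _ ≤ statWeight Nex ν φ n * (r * (n:ℝ)) := mul_le_mul_of_nonneg_left hstep hπ
        _ = r * ((n:ℝ) * statWeight Nex ν φ n) := by ring
    · exact_mod_cast h2
  -- summability of π
  have hP : Summable (statWeight Nex ν φ) := by
    apply summable_of_ratio_norm_eventually_le hr1
    filter_upwards [Filter.eventually_ge_atTop N] with n hn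
    have hnN : ν + Nex ≤ 3/4 * (n:ℝ) := hN n hn
    have hπ := hπ0 n
    rw [Real.norm_of_nonneg (hπ0 _), Real.norm_of_nonneg hπ, statWeight_succ]
    have hfn := hfac n
    have hbound : (ν + Nex / ((n:ℝ)+1)) / (ν + 1) ≤ r := by
      have hn1p : (0:ℝ) < (n:ℝ)+1 := by positivity
      have h34 : Nex / ((n:ℝ)+1) ≤ 3/4 := by
        rw [div_le_iff₀ hn1p]
        have : (0:ℝ) ≤ (n:ℝ) := n.cast_nonneg
        nlinarith
      rw [hr, div_le_div_iff₀ hν1 hν1]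
      nlinarith
    calc statWeight Nex ν φ n *
          (ν / (ν + 1) + Nex / (ν + 1) * Real.sin (φ * Real.sqrt ((n:ℝ)+1)) ^ 2 / ((n:ℝ)+1))
        ≤ statWeight Nex ν φ n * ((ν + Nex / ((n:ℝ)+1)) / (ν + 1)) :=
          mul_le_mul_of_nonneg_left hfn hπ
      _ ≤ statWeight Nex ν φ n * r := mul_le_mul_of_nonneg_left hbound hπ
      _ = r * statWeight Nex ν φ n := by ring
  -- summability of π * sin²
  have hS : Summable (fun n : ℕ =>
      statWeight Nex ν φ n * Real.sin (φ * Real.sqrt (n + 1)) ^ 2) := by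
    apply Summable.of_nonneg_of_le (fun n => by
        have := hπ0 n; positivity)
      (fun n => ?_) hP
    have hs : Real.sin (φ * Real.sqrt ((n:ℝ) + 1)) ^ 2 ≤ 1 := Real.sin_sq_le_one _
    have := hπ0 n
    nlinarith
  refine ⟨hT, hS, ?_⟩
  -- shifted summabilities
  have hshift : Summable (fun n : ℕ => ((n:ℝ)+1) * statWeight Nex ν φ (n+1)) := by
    have h := (summable_nat_add_iff 1).2 hT
    simpa using h
  have hB : Summable (fun n : ℕ => ((n:ℝ)+1) * statWeight Nex ν φ n) := by
    have h := hT.add hP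
    convert h using 2 with n
    ring
  have hA : ∑' n : ℕ, ((n:ℝ)+1) * statWeight Nex ν φ (n+1)
      = ∑' n : ℕ, (n:ℝ) * statWeight Nex ν φ n := by
    rw [Summable.tsum_eq_zero_add hT]
    push_cast
    simp
  have hBsum : ∑' n : ℕ, ((n:ℝ)+1) * statWeight Nex ν φ n
      = (∑' n : ℕ, (n:ℝ) * statWeight Nex ν φ n) + ∑' n : ℕ, statWeight Nex ν φ n := by
    rw [← Summable.tsum_add hT hP]
    congr 1; funext n; ring
  calc Nex * ∑' n : ℕ, statWeight Nex ν φ n * Real.sin (φ * Real.sqrt (n + 1)) ^ 2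
      = ∑' n : ℕ, Nex * (statWeight Nex ν φ n * Real.sin (φ * Real.sqrt ((n:ℝ) + 1)) ^ 2) := by
        rw [tsum_mul_left]
    _ = ∑' n : ℕ, ((ν+1) * (((n:ℝ)+1) * statWeight Nex ν φ (n+1)) -
          ν * (((n:ℝ)+1) * statWeight Nex ν φ n)) := by
        congr 1; funext n; exact key_identity hν n
    _ = (ν+1) * (∑' n : ℕ, ((n:ℝ)+1) * statWeight Nex ν φ (n+1)) -
          ν * (∑' n : ℕ, ((n:ℝ)+1) * statWeight Nex ν φ n) := by
        rw [Summable.tsum_sub (hshift.mul_left _) (hB.mul_left _), tsum_mul_left, tsum_mul_left]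
    _ = (∑' n : ℕ, (n : ℝ) * statWeight Nex ν φ n) -
        ν * ∑' n : ℕ, statWeight Nex ν φ n := by
        rw [hA, hBsum]; ring
end
end

section
/- The off-diagonal part B of the restricted L²-generator is relatively bounded with respect to its diagonal part A: there exists b > 0 such that for every finitely supported sequence x : ℕ → ℝ, ∑_{j≥0} ( λ_j·μ_{j+1}·x_{j+1} + λ_{j−1}·μ_j·x_{j−1} )² ≤ b · ∑_{j≥0} ( λ_j² + μ_j² )² · x_j², with the conventions λ_{−1} = 0 and x_{−1} = 0 (here λ_k, μ_k ≥ 0 denote the nonnegative square roots of the rates). -/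
noncomputable section

/-- Birth rates `λ_k² = N_ex·sin²(φ√(k+1)) + ν·(k+1)`. -/
noncomputable def lam2 (Nex ν φ : ℝ) (k : ℕ) : ℝ :=
  Nex * Real.sin (φ * Real.sqrt (k + 1)) ^ 2 + ν * (k + 1)

/-- Death rates `μ_k² = (ν+1)·k` (so `μ_0 = 0`). -/
noncomputable def mu2 (ν : ℝ) (k : ℕ) : ℝ := (ν + 1) * k

/-- The nonnegative square root `λ_k` of the birth rate. -/
noncomputable def lam (Nex ν φ : ℝ) (k : ℕ) : ℝ := Real.sqrt (lam2 Nex ν φ k)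

/-- The nonnegative square root `μ_k` of the death rate (so `μ_0 = 0`). -/
noncomputable def mu (ν : ℝ) (k : ℕ) : ℝ := Real.sqrt (mu2 ν k)

lemma lam2_nonneg (Nex ν φ : ℝ) (hNex : 0 ≤ Nex) (hν : 0 ≤ ν) (k : ℕ) :
    0 ≤ lam2 Nex ν φ k := by
  unfold lam2; positivity

lemma mu2_nonneg (ν : ℝ) (hν : 0 ≤ ν) (k : ℕ) : 0 ≤ mu2 ν k := by
  unfold mu2; positivity

lemma lam_sq (Nex ν φ : ℝ) (hNex : 0 ≤ Nex) (hν : 0 ≤ ν) (k : ℕ) :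
    lam Nex ν φ k ^ 2 = lam2 Nex ν φ k :=
  Real.sq_sqrt (lam2_nonneg Nex ν φ hNex hν k)

lemma mu_sq (ν : ℝ) (hν : 0 ≤ ν) (k : ℕ) : mu ν k ^ 2 = mu2 ν k :=
  Real.sq_sqrt (mu2_nonneg ν hν k)

lemma lam2_le (Nex ν φ : ℝ) (hNex : 0 ≤ Nex) (hν : 0 ≤ ν) (k : ℕ) :
    lam2 Nex ν φ k ≤ (Nex + ν) * (k + 1) := by
  unfold lam2
  have h1 : Real.sin (φ * Real.sqrt (k + 1)) ^ 2 ≤ 1 := Real.sin_sq_le_one _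
  have h2 : (0:ℝ) ≤ (k:ℝ) := Nat.cast_nonneg k
  nlinarith

lemma mu2_succ (ν : ℝ) (k : ℕ) : mu2 ν (k + 1) = (ν + 1) * ((k:ℝ) + 1) := by
  unfold mu2; push_cast; ring

lemma key1 (Nex ν φ : ℝ) (hNex : 0 < Nex) (hν : 0 ≤ ν) (k : ℕ) :
    2 * lam2 Nex ν φ k * mu2 ν (k + 1) ≤
      2 * (Nex + ν) * (lam2 Nex ν φ (k + 1) + mu2 ν (k + 1)) ^ 2 := by
  have h1 := lam2_le Nex ν φ hNex.le hν k
  have h2 := lam2_nonneg Nex ν φ hNex.le hν (k + 1)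
  have h3 := lam2_nonneg Nex ν φ hNex.le hν k
  have h4 := mu2_succ ν k
  have h5 : (0:ℝ) ≤ (k:ℝ) := Nat.cast_nonneg k
  have h6 : (0:ℝ) ≤ mu2 ν (k+1) := mu2_nonneg ν hν (k+1)
  rw [h4]
  set t : ℝ := (k:ℝ) + 1 with ht
  have ht1 : (1:ℝ) ≤ t := by rw [ht]; linarith
  have hsnn : (0:ℝ) ≤ (ν+1)*t := by positivity
  have hts : t ≤ (ν+1)*t := by nlinarith
  have sA : 2 * lam2 Nex ν φ k * ((ν+1)*t) ≤ 2*(Nex+ν)*t*((ν+1)*t) := by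
    nlinarith [mul_le_mul_of_nonneg_right h1 hsnn]
  have sB : 2*(Nex+ν)*t*((ν+1)*t) ≤ 2*(Nex+ν)*((ν+1)*t)*((ν+1)*t) := by
    have hNν : (0:ℝ) ≤ Nex + ν := by linarith
    nlinarith [mul_le_mul_of_nonneg_left hts (mul_nonneg hNν hsnn)]
  have sC : ((ν+1)*t)*((ν+1)*t) ≤ (lam2 Nex ν φ (k+1) + (ν+1)*t)^2 := by
    nlinarith [sq_nonneg (lam2 Nex ν φ (k+1)), mul_nonneg h2 hsnn]
  have hNν : (0:ℝ) ≤ 2*(Nex + ν) := by linarith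
  nlinarith [mul_le_mul_of_nonneg_left sC hNν]

lemma key2 (Nex ν φ : ℝ) (hNex : 0 < Nex) (hν : 0 ≤ ν) (k : ℕ) :
    2 * lam2 Nex ν φ k * mu2 ν (k + 1) ≤
      (8 * (Nex + ν) + 2 * (ν + 1) / lam2 Nex ν φ 0) *
        (lam2 Nex ν φ k + mu2 ν k) ^ 2 := by
  have hL0 := lam2_nonneg Nex ν φ hNex.le hν 0
  cases k with
  | zero =>
      have hmu0 : mu2 ν 0 = 0 := by simp [mu2]
      have hmu1 : mu2 ν 1 = ν + 1 := by simp [mu2]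
      rcases hL0.eq_or_lt with h | h
      · rw [hmu0, ← h]; simp
      · have hdiv : 2 * (ν + 1) / lam2 Nex ν φ 0 * (lam2 Nex ν φ 0) ^ 2
            = 2 * (ν + 1) * lam2 Nex ν φ 0 := by
          field_simp
        rw [hmu0, hmu1, add_zero]
        nlinarith [sq_nonneg (lam2 Nex ν φ 0), mul_pos h h]
  | succ m =>
      have h1 := lam2_le Nex ν φ hNex.le hν (m + 1)
      have h2 := lam2_nonneg Nex ν φ hNex.le hν (m + 1)
      have h4 := mu2_succ ν m
      have h5 := mu2_succ ν (m + 1)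
      have h6 : (0:ℝ) ≤ (m:ℝ) := Nat.cast_nonneg m
      have hdiv : 0 ≤ 2 * (ν + 1) / lam2 Nex ν φ 0 := by positivity
      have hcast : ((m + 1 : ℕ) : ℝ) = (m : ℝ) + 1 := by push_cast; ring
      rw [hcast] at h1 h5
      rw [h4, h5]
      set t : ℝ := (m:ℝ) + 1 with ht
      have ht1 : (1:ℝ) ≤ t := by rw [ht]; linarith
      have hμnn : (0:ℝ) ≤ (ν+1)*t := by positivity
      have hNν : (0:ℝ) ≤ Nex + ν := by linarith
      have h7 : (ν+1)*(t+1) ≤ 2*((ν+1)*t) := by nlinarith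
      have h8 : lam2 Nex ν φ (m+1) ≤ 2*(Nex+ν)*((ν+1)*t) := by
        have : (0:ℝ) ≤ 2*(ν+1)*t - (t+1) := by nlinarith
        nlinarith [mul_nonneg hNν this]
      have s1 : 2 * lam2 Nex ν φ (m+1) * ((ν+1)*(t+1))
          ≤ 2 * lam2 Nex ν φ (m+1) * (2*((ν+1)*t)) :=
        mul_le_mul_of_nonneg_left h7 (by linarith)
      have s3 : 2 * lam2 Nex ν φ (m+1) * (2*((ν+1)*t))
          ≤ 2 * (2*(Nex+ν)*((ν+1)*t)) * (2*((ν+1)*t)) := by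
        nlinarith [mul_le_mul_of_nonneg_right h8 hμnn]
      have s5 : ((ν+1)*t)^2 ≤ (lam2 Nex ν φ (m+1) + (ν+1)*t)^2 := by
        nlinarith [sq_nonneg (lam2 Nex ν φ (m+1)), mul_nonneg h2 hμnn]
      have s6 := mul_le_mul_of_nonneg_left s5 (by linarith : (0:ℝ) ≤ 8*(Nex+ν))
      have s7 : 0 ≤ 2 * (ν + 1) / lam2 Nex ν φ 0 * (lam2 Nex ν φ (m+1) + (ν+1)*t)^2 :=
        mul_nonneg hdiv (sq_nonneg _)
      calc 2 * lam2 Nex ν φ (m+1) * ((ν+1)*(t+1))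
          ≤ 2 * lam2 Nex ν φ (m+1) * (2*((ν+1)*t)) := s1
        _ ≤ 2 * (2*(Nex+ν)*((ν+1)*t)) * (2*((ν+1)*t)) := s3
        _ = 8*(Nex+ν)*((ν+1)*t)^2 := by ring
        _ ≤ 8*(Nex+ν)*(lam2 Nex ν φ (m+1) + (ν+1)*t)^2 := s6
        _ ≤ (8 * (Nex + ν) + 2 * (ν + 1) / lam2 Nex ν φ 0) *
            (lam2 Nex ν φ (m+1) + (ν+1)*t)^2 := by linarith [s7]

/-- The off-diagonal part `B` of the restricted `L²`-generator, acting by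
`(Bx)_j = λ_j·μ_{j+1}·x_{j+1} + λ_{j−1}·μ_j·x_{j−1}`, is relatively bounded with respect to
its diagonal part `(Ax)_j = −(λ_j² + μ_j²)·x_j`: there is `b > 0` such that for every finitely
supported `x : ℕ → ℝ`,
`∑_j (λ_j μ_{j+1} x_{j+1} + λ_{j−1} μ_j x_{j−1})² ≤ b·∑_j (λ_j² + μ_j²)²·x_j²`.
(Conventions `λ_{−1} = 0`, `x_{−1} = 0`: since `μ_0 = 0`, the term
`λ_{j−1}·μ_j·x_{j−1}` vanishes automatically at `j = 0`, so the formula below, which uses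
truncated subtraction on `ℕ`, agrees with these conventions.) -/
theorem offdiag_relatively_bounded (Nex ν φ : ℝ) (hNex : 0 < Nex) (hν : 0 ≤ ν) :
    ∃ b : ℝ, 0 < b ∧ ∀ x : ℕ → ℝ, (Function.support x).Finite →
      ∑' j : ℕ,
          (lam Nex ν φ j * mu ν (j + 1) * x (j + 1) +
            lam Nex ν φ (j - 1) * mu ν j * x (j - 1)) ^ 2 ≤
        b * ∑' j : ℕ, (lam2 Nex ν φ j + mu2 ν j) ^ 2 * x j ^ 2 := by
  set c₁ : ℝ := 2 * (Nex + ν) with hc₁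
  set c₂ : ℝ := 8 * (Nex + ν) + 2 * (ν + 1) / lam2 Nex ν φ 0 with hc₂
  have hL0 := lam2_nonneg Nex ν φ hNex.le hν 0
  have hc₁pos : 0 < c₁ := by rw [hc₁]; linarith
  have hc₂nn : 0 ≤ c₂ := by rw [hc₂]; positivity
  refine ⟨c₁ + 2 * c₂, by linarith, ?_⟩
  intro x hx
  obtain ⟨M, hM⟩ := hx.bddAbove
  set N := M + 1 with hN
  have hxz : ∀ k, N ≤ k → x k = 0 := by
    intro k hk
    by_contra h
    have := hM (Function.mem_support.mpr h)
    omega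
  set F : ℕ → ℝ := fun j =>
    (lam Nex ν φ j * mu ν (j + 1) * x (j + 1) +
      lam Nex ν φ (j - 1) * mu ν j * x (j - 1)) ^ 2 with hF
  set G : ℕ → ℝ := fun j => (lam2 Nex ν φ j + mu2 ν j) ^ 2 * x j ^ 2 with hG
  have hGnn : ∀ j, 0 ≤ G j := fun j => by rw [hG]; positivity
  have hGzero : ∀ j, N ≤ j → G j = 0 := by
    intro j hj; simp [hG, hxz j hj]
  have hFzero : ∀ j, N + 2 ≤ j → F j = 0 := by
    intro j hj
    have h1 : x (j + 1) = 0 := hxz _ (by omega)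
    have h2 : x (j - 1) = 0 := hxz _ (by omega)
    simp [hF, h1, h2]
  have htF : ∑' j, F j = ∑ j ∈ Finset.range (N + 2), F j :=
    tsum_eq_sum (fun j hj => hFzero j (by simp [Finset.mem_range] at hj; omega))
  have htG : ∑' j, G j = ∑ j ∈ Finset.range (N + 2), G j :=
    tsum_eq_sum (fun j hj => hGzero j (by simp [Finset.mem_range] at hj; omega))
  have hpt : ∀ j, F j ≤ c₁ * G (j + 1) + c₂ * G (j - 1) := by
    intro j
    have hA : (lam Nex ν φ j * mu ν (j + 1) * x (j + 1)) ^ 2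
        = lam2 Nex ν φ j * mu2 ν (j + 1) * x (j + 1) ^ 2 := by
      rw [mul_pow, mul_pow, lam_sq Nex ν φ hNex.le hν, mu_sq ν hν]
    have hB : (lam Nex ν φ (j - 1) * mu ν j * x (j - 1)) ^ 2
        = lam2 Nex ν φ (j - 1) * mu2 ν j * x (j - 1) ^ 2 := by
      rw [mul_pow, mul_pow, lam_sq Nex ν φ hNex.le hν, mu_sq ν hν]
    have hstep : F j ≤ 2 * (lam2 Nex ν φ j * mu2 ν (j + 1) * x (j + 1) ^ 2)
        + 2 * (lam2 Nex ν φ (j - 1) * mu2 ν j * x (j - 1) ^ 2) := by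
      have hFj : F j = (lam Nex ν φ j * mu ν (j + 1) * x (j + 1) +
          lam Nex ν φ (j - 1) * mu ν j * x (j - 1)) ^ 2 := rfl
      rw [hFj, ← hA, ← hB]
      nlinarith [sq_nonneg (lam Nex ν φ j * mu ν (j + 1) * x (j + 1) -
        lam Nex ν φ (j - 1) * mu ν j * x (j - 1))]
    have hs1 : 2 * (lam2 Nex ν φ j * mu2 ν (j + 1) * x (j + 1) ^ 2) ≤ c₁ * G (j + 1) := by
      have := mul_le_mul_of_nonneg_right (key1 Nex ν φ hNex hν j) (sq_nonneg (x (j + 1)))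
      rw [hG]; dsimp only; nlinarith [this]
    have hs2 : 2 * (lam2 Nex ν φ (j - 1) * mu2 ν j * x (j - 1) ^ 2) ≤ c₂ * G (j - 1) := by
      cases j with
      | zero =>
          have hmu0 : mu2 ν 0 = 0 := by simp [mu2]
          simp only [Nat.zero_sub, hmu0, mul_zero, zero_mul]
          exact mul_nonneg hc₂nn (hGnn 0)
      | succ m =>
          have h := mul_le_mul_of_nonneg_right (key2 Nex ν φ hNex hν m) (sq_nonneg (x m))
          rw [← hc₂] at h
          have hms : m + 1 - 1 = m := rfl
          have hGm : G m = (lam2 Nex ν φ m + mu2 ν m) ^ 2 * x m ^ 2 := rfl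
          simp only [hms, hGm]
          calc 2 * (lam2 Nex ν φ m * mu2 ν (m + 1) * x m ^ 2)
              = 2 * lam2 Nex ν φ m * mu2 ν (m + 1) * x m ^ 2 := by ring
            _ ≤ c₂ * (lam2 Nex ν φ m + mu2 ν m) ^ 2 * x m ^ 2 := h
            _ = c₂ * ((lam2 Nex ν φ m + mu2 ν m) ^ 2 * x m ^ 2) := by ring
    linarith
  have hsum1 : ∑ j ∈ Finset.range (N + 2), G (j + 1) ≤ ∑ j ∈ Finset.range (N + 2), G j := by
    have e1 := Finset.sum_range_succ' G (N + 2)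
    have e2 := Finset.sum_range_succ G (N + 2)
    have e3 : G (N + 2) = 0 := hGzero _ (by omega)
    have := hGnn 0
    linarith [e1, e2]
  have hsum2 : ∑ j ∈ Finset.range (N + 2), G (j - 1) ≤ 2 * ∑ j ∈ Finset.range (N + 2), G j := by
    have e1 := Finset.sum_range_succ' (fun j => G (j - 1)) (N + 1)
    simp only [Nat.add_sub_cancel, Nat.zero_sub] at e1
    have hsub : ∑ j ∈ Finset.range (N + 1), G j ≤ ∑ j ∈ Finset.range (N + 2), G j :=
      Finset.sum_le_sum_of_subset_of_nonneg
        (Finset.range_subset_range.mpr (by omega)) (fun i _ _ => hGnn i)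
    have h0 : G 0 ≤ ∑ j ∈ Finset.range (N + 2), G j :=
      Finset.single_le_sum (f := G) (fun i _ => hGnn i) (Finset.mem_range.mpr (by omega))
    linarith [e1]
  calc ∑' j, F j = ∑ j ∈ Finset.range (N + 2), F j := htF
    _ ≤ ∑ j ∈ Finset.range (N + 2), (c₁ * G (j + 1) + c₂ * G (j - 1)) :=
        Finset.sum_le_sum (fun j _ => hpt j)
    _ = c₁ * ∑ j ∈ Finset.range (N + 2), G (j + 1)
        + c₂ * ∑ j ∈ Finset.range (N + 2), G (j - 1) := by
        rw [Finset.sum_add_distrib, Finset.mul_sum, Finset.mul_sum]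
    _ ≤ (c₁ + 2 * c₂) * ∑ j ∈ Finset.range (N + 2), G j := by
        have hSnn : 0 ≤ ∑ j ∈ Finset.range (N + 2), G j :=
          Finset.sum_nonneg (fun i _ => hGnn i)
        nlinarith [mul_le_mul_of_nonneg_left hsum1 hc₁pos.le,
          mul_le_mul_of_nonneg_left hsum2 hc₂nn]
    _ = (c₁ + 2 * c₂) * ∑' j, G j := by rw [htG]
end
end
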